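/- arXiv:2211.06245 — 6 statements merged into one kernel-verified Lean document; each statement's English description precedes it below -/
import Mathlib

section
/- Let H = (V, E) be a 5-uniform hypergraph with EI(H) = C_n such that every hyperedge of H is a (3,2)-hyperedge (i.e., consists of one 3-section and one 2-section on the cycle C_n). Then |E| ≥ 2n/3. -/
open Finset

/-- Edge intersection hypergraph of a hypergraph with edge set `E` on vertex set `Fin n`. -/
def EIh {n : ℕ} (E : Finset (Finset (Fin n))) : Finset (Finset (Fin n)) :=
  ((E ×ˢ E).filter fun p => p.1 ≠ p.2 ∧ 2 ≤ (p.1 ∩ p.2).card).image fun p => p.1 ∩ p.2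

/-- The edge set of the cycle `C_n` on vertex set `Fin n`. -/
def cyc (n : ℕ) [NeZero n] : Finset (Finset (Fin n)) :=
  Finset.univ.image fun i : Fin n => ({i, i + 1} : Finset (Fin n))

/-- Degree of a vertex in a hypergraph. -/
def hdeg {n : ℕ} (E : Finset (Finset (Fin n))) (v : Fin n) : ℕ :=
  (E.filter fun e => v ∈ e).card

/-- `e` is a (3,2)-hyperedge: one maximal run of 3 consecutive cycle vertices and one
disjoint maximal run of 2 consecutive cycle vertices. -/
def IsSection32 {n : ℕ} [NeZero n] (e : Finset (Fin n)) : Prop :=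
  ∃ i j : Fin n, e = {i, i + 1, i + 2, j, j + 1} ∧ e.card = 5 ∧
    (i - 1) ∉ e ∧ (i + 3) ∉ e ∧ (j - 1) ∉ e ∧ (j + 2) ∉ e

open Fin.CommRing in
lemma two_ne_zero_fin {n : ℕ} [NeZero n] (hn : 3 ≤ n) : (2 : Fin n) ≠ 0 := by
  have h : ((2 : ℕ) : Fin n) = 2 := by push_cast; ring
  intro h0
  have hv : ((2 : ℕ) : Fin n).val = (0 : Fin n).val := by rw [h, h0]
  rw [Fin.val_natCast, Fin.val_zero, Nat.mod_eq_of_lt (by omega)] at hv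
  omega

open Fin.CommRing in
lemma one_ne_zero_fin {n : ℕ} [NeZero n] (hn : 3 ≤ n) : (1 : Fin n) ≠ 0 := by
  have h : ((1 : ℕ) : Fin n) = 1 := by push_cast; ring
  intro h0
  have hv : ((1 : ℕ) : Fin n).val = (0 : Fin n).val := by rw [h, h0]
  rw [Fin.val_natCast, Fin.val_zero, Nat.mod_eq_of_lt (by omega)] at hv
  omega

open Fin.CommRing in
lemma cyc_card {n : ℕ} [NeZero n] (hn : 3 ≤ n) : (cyc n).card = n := by
  rw [cyc, Finset.card_image_of_injective _ ?_, Finset.card_univ, Fintype.card_fin]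
  intro i j h
  simp only [Finset.ext_iff, Finset.mem_insert, Finset.mem_singleton] at h
  rcases (h i).mp (Or.inl rfl) with h1 | h1
  · exact h1
  · rcases (h (i+1)).mp (Or.inr rfl) with h2 | h2
    · exfalso
      have h3 : j + 2 = j := by rw [show j + 2 = i + 1 by rw [h1]; ring, h2]
      exact two_ne_zero_fin hn (add_eq_left.mp h3)
    · exfalso
      have h4 : i = j := add_right_cancel h2
      have h5 : j + 1 = j := by rw [← h1, h4]
      exact one_ne_zero_fin hn (add_eq_left.mp h5)

lemma lower_bound {n : ℕ} [NeZero n] (E : Finset (Finset (Fin n)))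
    (hEI : EIh E = cyc n) {c : Finset (Fin n)} (hc : c ∈ cyc n) :
    2 ≤ (E.filter fun e => c ⊆ e).card := by
  rw [← hEI] at hc
  simp only [EIh, Finset.mem_image, Finset.mem_filter, Finset.mem_product] at hc
  obtain ⟨⟨e1, e2⟩, ⟨⟨he1, he2⟩, hne, _⟩, heq⟩ := hc
  exact Finset.one_lt_card.mpr ⟨e1, by simp [he1, ← heq, Finset.inter_subset_left],
         e2, by simp [he2, ← heq, Finset.inter_subset_right], hne⟩

open Fin.CommRing in
lemma upper_bound {n : ℕ} [NeZero n] {e : Finset (Fin n)} (h : IsSection32 e) :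
    ((cyc n).filter fun c => c ⊆ e).card ≤ 3 := by
  obtain ⟨i, j, hij, _, him, hip, hjm, hjp⟩ := h
  have hsub : ((cyc n).filter fun c => c ⊆ e) ⊆
      ({{i, i+1}, {i+1, i+2}, {j, j+1}} : Finset (Finset (Fin n))) := by
    intro c hc
    simp only [Finset.mem_filter, cyc, Finset.mem_image, Finset.mem_univ, true_and] at hc
    obtain ⟨⟨k, hk⟩, hce⟩ := hc
    subst hk
    have hk1 : k ∈ e := hce (by simp)
    have hk2 : k + 1 ∈ e := hce (by simp)
    rw [hij] at hk1
    simp only [Finset.mem_insert, Finset.mem_singleton] at hk1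
    simp only [Finset.mem_insert, Finset.mem_singleton]
    rcases hk1 with rfl | rfl | rfl | rfl | rfl
    · left; rfl
    · right; left; rw [show i + 1 + 1 = i + 2 by ring]
    · exfalso; apply hip; rw [show i + 3 = i + 2 + 1 by ring]; exact hk2
    · right; right; rfl
    · exfalso; apply hjp; rw [show j + 2 = j + 1 + 1 by ring]; exact hk2
  calc ((cyc n).filter fun c => c ⊆ e).card
      ≤ ({{i, i+1}, {i+1, i+2}, {j, j+1}} : Finset (Finset (Fin n))).card :=
        Finset.card_le_card hsub
    _ ≤ 3 := by
        apply le_trans (Finset.card_insert_le _ _)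
        apply Nat.succ_le_succ
        apply le_trans (Finset.card_insert_le _ _)
        simp

theorem stmt_11 (n : ℕ) [NeZero n] (hn : 3 ≤ n) (E : Finset (Finset (Fin n)))
    (hunif : ∀ e ∈ E, e.card = 5) (hEI : EIh E = cyc n)
    (h32 : ∀ e ∈ E, IsSection32 e) : 2 * n ≤ 3 * E.card := by
  have key : ∑ c ∈ cyc n, (E.filter fun e => c ⊆ e).card
      = ∑ e ∈ E, ((cyc n).filter fun c => c ⊆ e).card := by
    simp only [Finset.card_filter]
    exact Finset.sum_comm
  calc 2 * n = ∑ _c ∈ cyc n, 2 := by rw [Finset.sum_const, cyc_card hn, smul_eq_mul, mul_comm]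
    _ ≤ ∑ c ∈ cyc n, (E.filter fun e => c ⊆ e).card :=
        Finset.sum_le_sum fun c hc => lower_bound E hEI hc
    _ = ∑ e ∈ E, ((cyc n).filter fun c => c ⊆ e).card := key
    _ ≤ ∑ _e ∈ E, 3 := Finset.sum_le_sum fun e he => upper_bound (h32 e he)
    _ = 3 * E.card := by rw [Finset.sum_const, smul_eq_mul, mul_comm]
end

section
/- Let n ≥ 21 with n ≡ 0 (mod 3). The 5-uniform hypergraph H on V = {1,...,n} with hyperedges E = { {i, i+1, i+2, i+8, i+9} : i ∈ {1, 4, 7, ..., n−2} } ∪ { {i, i+1, i+2, i+5, i+6} : i ∈ {2, 5, 8, ..., n−1} } (indices mod n) satisfies EI(H) = C_n, consists entirely of (3,2)-hyperedges, and has |E| = 2n/3. -/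
open Finset
open Fin.NatCast

/- ---------------- auxiliary definitions and lemmas ---------------- -/

def Pe (n : ℕ) [NeZero n] (i : ℕ) : Finset (Fin n) :=
  ({(i : Fin n), ((i + 1 : ℕ) : Fin n), ((i + 2 : ℕ) : Fin n),
    ((i + 8 : ℕ) : Fin n), ((i + 9 : ℕ) : Fin n)} : Finset (Fin n))

def Qe (n : ℕ) [NeZero n] (i : ℕ) : Finset (Fin n) :=
  ({(i : Fin n), ((i + 1 : ℕ) : Fin n), ((i + 2 : ℕ) : Fin n),
    ((i + 5 : ℕ) : Fin n), ((i + 6 : ℕ) : Fin n)} : Finset (Fin n))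

def Eset (n : ℕ) [NeZero n] : Finset (Finset (Fin n)) :=
  (((Finset.range n).filter fun i => i % 3 = 1).image (Pe n)) ∪
  (((Finset.range n).filter fun i => i % 3 = 2).image (Qe n))

section helpers

variable {n : ℕ} [NeZero n]

lemma castv (x : ℕ) (hx : x < 2 * n) (v : Fin n) :
    v = (x : Fin n) ↔ (v.val = x ∨ v.val + n = x) := by
  have hv := v.isLt
  rw [Fin.ext_iff, Fin.val_natCast]
  rcases Nat.lt_or_ge x n with h | h
  · rw [Nat.mod_eq_of_lt h]; omega
  · rw [Nat.mod_eq_sub_mod h, Nat.mod_eq_of_lt (by omega)]; omega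

lemma val2 (x : ℕ) (hx : x < 3 * n) :
    ((x : Fin n)).val = x ∨ ((x : Fin n)).val + n = x ∨ ((x : Fin n)).val + 2 * n = x := by
  rw [Fin.val_natCast]
  rcases Nat.lt_or_ge x n with h | h
  · rw [Nat.mod_eq_of_lt h]; omega
  · rcases Nat.lt_or_ge x (2 * n) with h2 | h2
    · rw [Nat.mod_eq_sub_mod h, Nat.mod_eq_of_lt (by omega)]; omega
    · rw [Nat.mod_eq_sub_mod h, Nat.mod_eq_sub_mod (by omega), Nat.mod_eq_of_lt (by omega)]
      omega

lemma cast_inj2 (x y : ℕ) (hx : x < 2 * n) (hy : y < 2 * n) :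
    ((x : Fin n) = (y : Fin n)) ↔ (x = y ∨ x + n = y ∨ y + n = x) := by
  have h1 := val2 (n := n) x (by omega)
  have h2 := ((x : Fin n)).isLt
  rw [castv y hy]
  omega

lemma cast_eq_of (x y : ℕ) (h : x = y ∨ x = y + n ∨ y = x + n) :
    ((x : Fin n) = (y : Fin n)) := by
  rcases h with rfl | rfl | rfl
  · rfl
  · rw [Nat.cast_add, Fin.natCast_self, add_zero]
  · rw [Nat.cast_add, Fin.natCast_self, add_zero]

lemma ncast_n1 (hn : 1 ≤ n) : (((n - 1 : ℕ)) : Fin n) = -1 := by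
  have h : ((n - 1 : ℕ) : Fin n) + 1 = 0 := by
    rw [show (1 : Fin n) = ((1 : ℕ) : Fin n) from (Nat.cast_one).symm, ← Nat.cast_add,
      show n - 1 + 1 = n from by omega, Fin.natCast_self]
  exact eq_neg_of_add_eq_zero_left h

lemma sub_one_cast (hn : 1 ≤ n) (x : ℕ) :
    ((x : ℕ) : Fin n) - 1 = ((x + (n - 1) : ℕ) : Fin n) := by
  rw [Nat.cast_add, ncast_n1 hn, sub_eq_add_neg]

lemma mem_Pe (hn : 21 ≤ n) (i : ℕ) (hi : i < n) (v : Fin n) :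
    v ∈ Pe n i ↔ ((v.val = i ∨ v.val + n = i) ∨ (v.val = i + 1 ∨ v.val + n = i + 1) ∨
      (v.val = i + 2 ∨ v.val + n = i + 2) ∨ (v.val = i + 8 ∨ v.val + n = i + 8) ∨
      (v.val = i + 9 ∨ v.val + n = i + 9)) := by
  unfold Pe
  simp only [mem_insert, mem_singleton]
  rw [castv i (by omega) v, castv (i + 1) (by omega) v, castv (i + 2) (by omega) v,
    castv (i + 8) (by omega) v, castv (i + 9) (by omega) v]

lemma mem_Qe (hn : 21 ≤ n) (i : ℕ) (hi : i < n) (v : Fin n) :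
    v ∈ Qe n i ↔ ((v.val = i ∨ v.val + n = i) ∨ (v.val = i + 1 ∨ v.val + n = i + 1) ∨
      (v.val = i + 2 ∨ v.val + n = i + 2) ∨ (v.val = i + 5 ∨ v.val + n = i + 5) ∨
      (v.val = i + 6 ∨ v.val + n = i + 6)) := by
  unfold Qe
  simp only [mem_insert, mem_singleton]
  rw [castv i (by omega) v, castv (i + 1) (by omega) v, castv (i + 2) (by omega) v,
    castv (i + 5) (by omega) v, castv (i + 6) (by omega) v]

lemma caseA (hn : 21 ≤ n) (i j : ℕ) (hi : i < n) (hj : j < n)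
    (hrel : j = i + 1 ∨ j + n = i + 1) :
    Pe n i ∩ Qe n j = {((i + 1 : ℕ) : Fin n), ((i + 1 + 1 : ℕ) : Fin n)} := by
  ext v
  rw [mem_inter, mem_Pe hn i hi, mem_Qe hn j hj, mem_insert, mem_singleton,
    castv (i + 1) (by omega) v, castv (i + 1 + 1) (by omega) v]
  have hv := v.isLt
  omega

lemma caseB (hn : 21 ≤ n) (i j : ℕ) (hi : i < n) (hj : j < n)
    (hrel : j = i + 7 ∨ j + n = i + 7) :
    Pe n i ∩ Qe n j = {((i + 8 : ℕ) : Fin n), ((i + 8 + 1 : ℕ) : Fin n)} := by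
  ext v
  rw [mem_inter, mem_Pe hn i hi, mem_Qe hn j hj, mem_insert, mem_singleton,
    castv (i + 8) (by omega) v, castv (i + 8 + 1) (by omega) v]
  have hv := v.isLt
  omega

lemma caseC (hn : 21 ≤ n) (i j : ℕ) (hi : i < n) (hj : j < n)
    (hrel : i = j + 5 ∨ i + n = j + 5) :
    Pe n i ∩ Qe n j = {((i : ℕ) : Fin n), ((i + 1 : ℕ) : Fin n)} := by
  ext v
  rw [mem_inter, mem_Pe hn i hi, mem_Qe hn j hj, mem_insert, mem_singleton,
    castv i (by omega) v, castv (i + 1) (by omega) v]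
  have hv := v.isLt
  omega

set_option maxHeartbeats 1600000 in
lemma lePQ (hn : 21 ≤ n) (hmod : n % 3 = 0) (i j : ℕ) (hi : i < n) (hj : j < n)
    (hi3 : i % 3 = 1) (hj3 : j % 3 = 2) (h : 2 ≤ (Pe n i ∩ Qe n j).card) :
    (j = i + 1 ∨ j + n = i + 1) ∨ (j = i + 7 ∨ j + n = i + 7) ∨
      (i = j + 5 ∨ i + n = j + 5) := by
  obtain ⟨v, hv, w, hw, hvw⟩ := Finset.one_lt_card.mp h
  rw [mem_inter, mem_Pe hn i hi, mem_Qe hn j hj] at hv hw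
  have h1 := v.isLt; have h2 := w.isLt
  have hne : v.val ≠ w.val := fun hh => hvw (Fin.ext hh)
  omega

set_option maxHeartbeats 1600000 in
lemma lePP (hn : 21 ≤ n) (hmod : n % 3 = 0) (i j : ℕ) (hi : i < n) (hj : j < n)
    (hi3 : i % 3 = 1) (hj3 : j % 3 = 1) (h : 2 ≤ (Pe n i ∩ Pe n j).card) : i = j := by
  obtain ⟨v, hv, w, hw, hvw⟩ := Finset.one_lt_card.mp h
  rw [mem_inter, mem_Pe hn i hi, mem_Pe hn j hj] at hv hw
  have h1 := v.isLt; have h2 := w.isLt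
  have hne : v.val ≠ w.val := fun hh => hvw (Fin.ext hh)
  omega

set_option maxHeartbeats 1600000 in
lemma leQQ (hn : 21 ≤ n) (hmod : n % 3 = 0) (i j : ℕ) (hi : i < n) (hj : j < n)
    (hi3 : i % 3 = 2) (hj3 : j % 3 = 2) (h : 2 ≤ (Qe n i ∩ Qe n j).card) : i = j := by
  obtain ⟨v, hv, w, hw, hvw⟩ := Finset.one_lt_card.mp h
  rw [mem_inter, mem_Qe hn i hi, mem_Qe hn j hj] at hv hw
  have h1 := v.isLt; have h2 := w.isLt
  have hne : v.val ≠ w.val := fun hh => hvw (Fin.ext hh)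
  omega

lemma card_Pe (hn : 21 ≤ n) (i : ℕ) (hi : i < n) : (Pe n i).card = 5 := by
  have himg : Pe n i = ({0, 1, 2, 8, 9} : Finset ℕ).image (fun a => ((i + a : ℕ) : Fin n)) := by
    simp [Pe, image_insert, image_singleton]
  rw [himg, card_image_of_injOn, show ({0, 1, 2, 8, 9} : Finset ℕ).card = 5 from rfl]
  intro a ha b hb h
  simp only [coe_insert, Set.mem_insert_iff, coe_singleton, Set.mem_singleton_iff] at ha hb
  rw [cast_inj2 _ _ (by omega) (by omega)] at h
  omega

lemma card_Qe (hn : 21 ≤ n) (i : ℕ) (hi : i < n) : (Qe n i).card = 5 := by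
  have himg : Qe n i = ({0, 1, 2, 5, 6} : Finset ℕ).image (fun a => ((i + a : ℕ) : Fin n)) := by
    simp [Qe, image_insert, image_singleton]
  rw [himg, card_image_of_injOn, show ({0, 1, 2, 5, 6} : Finset ℕ).card = 5 from rfl]
  intro a ha b hb h
  simp only [coe_insert, Set.mem_insert_iff, coe_singleton, Set.mem_singleton_iff] at ha hb
  rw [cast_inj2 _ _ (by omega) (by omega)] at h
  omega

lemma card_pair2 (hn : 21 ≤ n) (a : ℕ) (ha : a + 1 < 2 * n) :
    (({((a : ℕ) : Fin n), ((a + 1 : ℕ) : Fin n)} : Finset (Fin n))).card = 2 := by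
  refine Finset.card_pair ?_
  rw [Ne, cast_inj2 a (a + 1) (by omega) (by omega)]
  omega

lemma pair_card_le (a b : Fin n) : ({a, b} : Finset (Fin n)).card ≤ 2 := by
  refine le_trans (card_insert_le _ _) ?_
  simp

lemma PQne (hn : 21 ≤ n) (hmod : n % 3 = 0) (i j : ℕ) (hi : i < n) (hj : j < n)
    (hi3 : i % 3 = 1) (hj3 : j % 3 = 2) : Pe n i ≠ Qe n j := by
  intro he
  have h2 : 2 ≤ (Pe n i ∩ Qe n j).card := by
    rw [he, inter_self, card_Qe hn j hj]; omega
  have h5 : (Qe n j).card = 5 := card_Qe hn j hj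
  rcases lePQ hn hmod i j hi hj hi3 hj3 h2 with hr | hr | hr
  · have hc := caseA hn i j hi hj hr
    rw [he, inter_self] at hc
    rw [hc] at h5
    have := pair_card_le (n := n) ((i + 1 : ℕ) : Fin n) ((i + 1 + 1 : ℕ) : Fin n)
    omega
  · have hc := caseB hn i j hi hj hr
    rw [he, inter_self] at hc
    rw [hc] at h5
    have := pair_card_le (n := n) ((i + 8 : ℕ) : Fin n) ((i + 8 + 1 : ℕ) : Fin n)
    omega
  · have hc := caseC hn i j hi hj hr
    rw [he, inter_self] at hc
    rw [hc] at h5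
    have := pair_card_le (n := n) ((i : ℕ) : Fin n) ((i + 1 : ℕ) : Fin n)
    omega

lemma mem_EIh {E : Finset (Finset (Fin n))} {f : Finset (Fin n)} :
    f ∈ EIh E ↔ ∃ e1 ∈ E, ∃ e2 ∈ E, e1 ≠ e2 ∧ 2 ≤ (e1 ∩ e2).card ∧ e1 ∩ e2 = f := by
  unfold EIh
  simp only [mem_image, mem_filter, mem_product, Prod.exists]
  constructor
  · rintro ⟨a, b, ⟨⟨h1, h2⟩, h3, h4⟩, h5⟩; exact ⟨a, h1, b, h2, h3, h4, h5⟩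
  · rintro ⟨a, h1, b, h2, h3, h4, h5⟩; exact ⟨a, b, ⟨⟨h1, h2⟩, h3, h4⟩, h5⟩

lemma pair_mem_cyc (x y : ℕ) (h : y = x + 1) :
    ({((x : ℕ) : Fin n), ((y : ℕ) : Fin n)} : Finset (Fin n)) ∈ cyc n := by
  subst h
  rw [cyc, mem_image]
  refine ⟨(x : Fin n), mem_univ _, ?_⟩
  push_cast
  rfl

lemma mem_Eset {e : Finset (Fin n)} :
    e ∈ Eset n ↔ (∃ i, (i < n ∧ i % 3 = 1) ∧ Pe n i = e) ∨
      (∃ i, (i < n ∧ i % 3 = 2) ∧ Qe n i = e) := by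
  unfold Eset
  simp [mem_union, mem_image, mem_filter, mem_range]

lemma Pe_mem (i : ℕ) (hi : i < n) (hi3 : i % 3 = 1) : Pe n i ∈ Eset n :=
  mem_union_left _ (mem_image_of_mem _ (by simp [mem_filter, mem_range, hi, hi3]))

lemma Qe_mem (i : ℕ) (hi : i < n) (hi3 : i % 3 = 2) : Qe n i ∈ Eset n :=
  mem_union_right _ (mem_image_of_mem _ (by simp [mem_filter, mem_range, hi, hi3]))

lemma build (hn : 21 ≤ n) (hmod : n % 3 = 0) (i j m a : ℕ) (hi : i < n) (hj : j < n)
    (hi3 : i % 3 = 1) (hj3 : j % 3 = 2) (hm : m < n) (ha : a + 1 < 2 * n)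
    (hcomp : Pe n i ∩ Qe n j = {((a : ℕ) : Fin n), ((a + 1 : ℕ) : Fin n)})
    (hrel : a = m ∨ a = m + n) :
    ({((m : ℕ) : Fin n), ((m + 1 : ℕ) : Fin n)} : Finset (Fin n)) ∈ EIh (Eset n) := by
  have e1 : ((a : ℕ) : Fin n) = ((m : ℕ) : Fin n) := cast_eq_of a m (by omega)
  have e2 : ((a + 1 : ℕ) : Fin n) = ((m + 1 : ℕ) : Fin n) := cast_eq_of _ _ (by omega)
  rw [← e1, ← e2]
  refine mem_EIh.mpr ⟨Pe n i, Pe_mem i hi hi3, Qe n j, Qe_mem j hj hj3,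
    PQne hn hmod i j hi hj hi3 hj3, ?_, hcomp⟩
  rw [hcomp, card_pair2 hn a ha]

lemma sec_P (hn : 21 ≤ n) (i : ℕ) (hi : i < n) : IsSection32 (Pe n i) := by
  refine ⟨(i : Fin n), ((i + 8 : ℕ) : Fin n), ?_, card_Pe hn i hi, ?_, ?_, ?_, ?_⟩
  · have c1 : ((i + 1 : ℕ) : Fin n) = (i : Fin n) + 1 := by push_cast; ring
    have c2 : ((i + 2 : ℕ) : Fin n) = (i : Fin n) + 2 := by push_cast; ring
    have c3 : ((i + 9 : ℕ) : Fin n) = ((i + 8 : ℕ) : Fin n) + 1 := by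
      rw [show i + 9 = i + 8 + 1 from rfl, Nat.cast_add (i + 8) 1, Nat.cast_one]
    unfold Pe
    rw [c1, c2, c3]
  · rw [sub_one_cast (by omega) i]
    intro hmem
    rw [mem_Pe hn i hi] at hmem
    have hval := val2 (n := n) (i + (n - 1)) (by omega)
    have hlt := (((i + (n - 1) : ℕ)) : Fin n).isLt
    omega
  · have c : (i : Fin n) + 3 = ((i + 3 : ℕ) : Fin n) := by push_cast; ring
    rw [c]; intro hmem; rw [mem_Pe hn i hi] at hmem
    have hval := val2 (n := n) (i + 3) (by omega)
    have hlt := (((i + 3 : ℕ)) : Fin n).isLt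
    omega
  · rw [sub_one_cast (by omega) (i + 8)]
    intro hmem; rw [mem_Pe hn i hi] at hmem
    have hval := val2 (n := n) (i + 8 + (n - 1)) (by omega)
    have hlt := (((i + 8 + (n - 1) : ℕ)) : Fin n).isLt
    omega
  · have c : ((i + 8 : ℕ) : Fin n) + 2 = ((i + 10 : ℕ) : Fin n) := by
      rw [show i + 10 = i + 8 + 2 from rfl, Nat.cast_add (i + 8) 2, Nat.cast_ofNat]
    rw [c]; intro hmem; rw [mem_Pe hn i hi] at hmem
    have hval := val2 (n := n) (i + 10) (by omega)
    have hlt := (((i + 10 : ℕ)) : Fin n).isLt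
    omega

lemma sec_Q (hn : 21 ≤ n) (i : ℕ) (hi : i < n) : IsSection32 (Qe n i) := by
  refine ⟨(i : Fin n), ((i + 5 : ℕ) : Fin n), ?_, card_Qe hn i hi, ?_, ?_, ?_, ?_⟩
  · have c1 : ((i + 1 : ℕ) : Fin n) = (i : Fin n) + 1 := by push_cast; ring
    have c2 : ((i + 2 : ℕ) : Fin n) = (i : Fin n) + 2 := by push_cast; ring
    have c3 : ((i + 6 : ℕ) : Fin n) = ((i + 5 : ℕ) : Fin n) + 1 := by
      rw [show i + 6 = i + 5 + 1 from rfl, Nat.cast_add (i + 5) 1, Nat.cast_one]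
    unfold Qe
    rw [c1, c2, c3]
  · rw [sub_one_cast (by omega) i]
    intro hmem
    rw [mem_Qe hn i hi] at hmem
    have hval := val2 (n := n) (i + (n - 1)) (by omega)
    have hlt := (((i + (n - 1) : ℕ)) : Fin n).isLt
    omega
  · have c : (i : Fin n) + 3 = ((i + 3 : ℕ) : Fin n) := by push_cast; ring
    rw [c]; intro hmem; rw [mem_Qe hn i hi] at hmem
    have hval := val2 (n := n) (i + 3) (by omega)
    have hlt := (((i + 3 : ℕ)) : Fin n).isLt
    omega
  · rw [sub_one_cast (by omega) (i + 5)]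
    intro hmem; rw [mem_Qe hn i hi] at hmem
    have hval := val2 (n := n) (i + 5 + (n - 1)) (by omega)
    have hlt := (((i + 5 + (n - 1) : ℕ)) : Fin n).isLt
    omega
  · have c : ((i + 5 : ℕ) : Fin n) + 2 = ((i + 7 : ℕ) : Fin n) := by
      rw [show i + 7 = i + 5 + 2 from rfl, Nat.cast_add (i + 5) 2, Nat.cast_ofNat]
    rw [c]; intro hmem; rw [mem_Qe hn i hi] at hmem
    have hval := val2 (n := n) (i + 7) (by omega)
    have hlt := (((i + 7 : ℕ)) : Fin n).isLt
    omega

end helpers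

theorem stmt_12 (n : ℕ) [NeZero n] (hn : 21 ≤ n) (hmod : n % 3 = 0) :
    letI E : Finset (Finset (Fin n)) :=
      (((Finset.range n).filter fun i => i % 3 = 1).image fun i : ℕ =>
        ({(i : Fin n), ((i + 1 : ℕ) : Fin n), ((i + 2 : ℕ) : Fin n),
          ((i + 8 : ℕ) : Fin n), ((i + 9 : ℕ) : Fin n)} : Finset (Fin n))) ∪
      (((Finset.range n).filter fun i => i % 3 = 2).image fun i : ℕ =>
        ({(i : Fin n), ((i + 1 : ℕ) : Fin n), ((i + 2 : ℕ) : Fin n),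
          ((i + 5 : ℕ) : Fin n), ((i + 6 : ℕ) : Fin n)} : Finset (Fin n)))
    EIh E = cyc n ∧ (∀ e ∈ E, IsSection32 e) ∧ 3 * E.card = 2 * n := by
  show EIh (Eset n) = cyc n ∧ (∀ e ∈ Eset n, IsSection32 e) ∧ 3 * (Eset n).card = 2 * n
  refine ⟨?_, ?_, ?_⟩
  · -- EIh (Eset n) = cyc n
    apply Finset.ext
    intro f
    constructor
    · intro hf
      obtain ⟨e1, he1, e2, he2, hne, hcard, rfl⟩ := mem_EIh.mp hf
      rcases mem_Eset.mp he1 with ⟨i, ⟨hi, hi3⟩, rfl⟩ | ⟨i, ⟨hi, hi3⟩, rfl⟩ <;>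
        rcases mem_Eset.mp he2 with ⟨j, ⟨hj, hj3⟩, rfl⟩ | ⟨j, ⟨hj, hj3⟩, rfl⟩
      · obtain rfl := lePP hn hmod i j hi hj hi3 hj3 hcard
        exact absurd rfl hne
      · rcases lePQ hn hmod i j hi hj hi3 hj3 hcard with hr | hr | hr
        · rw [caseA hn i j hi hj hr]; exact pair_mem_cyc _ _ rfl
        · rw [caseB hn i j hi hj hr]; exact pair_mem_cyc _ _ rfl
        · rw [caseC hn i j hi hj hr]; exact pair_mem_cyc _ _ rfl
      · rw [inter_comm]
        rw [inter_comm] at hcard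
        rcases lePQ hn hmod j i hj hi hj3 hi3 hcard with hr | hr | hr
        · rw [caseA hn j i hj hi hr]; exact pair_mem_cyc _ _ rfl
        · rw [caseB hn j i hj hi hr]; exact pair_mem_cyc _ _ rfl
        · rw [caseC hn j i hj hi hr]; exact pair_mem_cyc _ _ rfl
      · obtain rfl := leQQ hn hmod i j hi hj hi3 hj3 hcard
        exact absurd rfl hne
    · intro hf
      rw [cyc, mem_image] at hf
      obtain ⟨v, -, rfl⟩ := hf
      have hm : v.val < n := v.isLt
      have hpair : ({v, v + 1} : Finset (Fin n)) =
          {((v.val : ℕ) : Fin n), ((v.val + 1 : ℕ) : Fin n)} := by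
        have h1 : ((v.val : ℕ) : Fin n) = v := Fin.cast_val_eq_self v
        have h2 : ((v.val + 1 : ℕ) : Fin n) = v + 1 := by
          rw [Nat.cast_add, Nat.cast_one, h1]
        rw [h1, h2]
      rw [hpair]
      set m := v.val with hmv
      rcases (show m % 3 = 0 ∨ m % 3 = 1 ∨ m % 3 = 2 by omega) with h3 | h3 | h3
      · -- m ≡ 0 : i = m - 8 (mod n), j = m - 1 (mod n), pair = {i+8, i+9}
        rcases le_or_gt 8 m with h8 | h8
        · exact build hn hmod (m - 8) (m - 1) m ((m - 8) + 8) (by omega) (by omega)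
            (by omega) (by omega) hm (by omega)
            (caseB hn (m - 8) (m - 1) (by omega) (by omega) (by omega)) (by omega)
        · rcases le_or_gt 1 m with h1 | h1
          · exact build hn hmod (m + n - 8) (m - 1) m ((m + n - 8) + 8) (by omega) (by omega)
              (by omega) (by omega) hm (by omega)
              (caseB hn (m + n - 8) (m - 1) (by omega) (by omega) (by omega)) (by omega)
          · exact build hn hmod (m + n - 8) (n - 1) m ((m + n - 8) + 8) (by omega) (by omega)
              (by omega) (by omega) hm (by omega)
              (caseB hn (m + n - 8) (n - 1) (by omega) (by omega) (by omega)) (by omega)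
      · -- m ≡ 1 : i = m, j = m - 5 (mod n), pair = {i, i+1}
        rcases le_or_gt 5 m with h5 | h5
        · exact build hn hmod m (m - 5) m m hm (by omega) (by omega) (by omega) hm (by omega)
            (caseC hn m (m - 5) hm (by omega) (by omega)) (by omega)
        · exact build hn hmod m (m + n - 5) m m hm (by omega) (by omega) (by omega) hm
            (by omega) (caseC hn m (m + n - 5) hm (by omega) (by omega)) (by omega)
      · -- m ≡ 2 : i = m - 1, j = m, pair = {i+1, i+2}
        exact build hn hmod (m - 1) m m ((m - 1) + 1) (by omega) hm (by omega) h3 hm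
          (by omega) (caseA hn (m - 1) m (by omega) hm (by omega)) (by omega)
  · -- all edges are (3,2)-hyperedges
    intro e he
    rcases mem_Eset.mp he with ⟨i, ⟨hi, hi3⟩, rfl⟩ | ⟨i, ⟨hi, hi3⟩, rfl⟩
    · exact sec_P hn i hi
    · exact sec_Q hn i hi
  · -- counting
    have hdisj : Disjoint (((Finset.range n).filter fun i => i % 3 = 1).image (Pe n))
        (((Finset.range n).filter fun i => i % 3 = 2).image (Qe n)) := by
      rw [disjoint_left]
      rintro e he1 he2
      obtain ⟨i, hi, rfl⟩ := mem_image.mp he1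
      obtain ⟨j, hj, hePQ⟩ := mem_image.mp he2
      simp only [mem_filter, mem_range] at hi hj
      exact PQne hn hmod i j hi.1 hj.1 hi.2 hj.2 hePQ.symm
    have hc1 : (((Finset.range n).filter fun i => i % 3 = 1).image (Pe n)).card = n / 3 := by
      rw [card_image_of_injOn]
      · have hre : ((Finset.range n).filter fun i => i % 3 = 1) =
            (Finset.range (n / 3)).image fun k => 3 * k + 1 := by
          ext x
          simp only [mem_filter, mem_range, mem_image]
          constructor
          · rintro ⟨hx1, hx2⟩; exact ⟨x / 3, by omega, by omega⟩
          · rintro ⟨k, hk, rfl⟩; omega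
        rw [hre, card_image_of_injective _ (fun a b hab => by omega), card_range]
      · intro a ha b hb hab
        simp only [coe_filter, mem_coe, mem_range, Set.mem_setOf_eq] at ha hb
        have h2 : 2 ≤ (Pe n a ∩ Pe n b).card := by
          rw [hab, inter_self, card_Pe hn b hb.1]; omega
        exact lePP hn hmod a b ha.1 hb.1 ha.2 hb.2 h2
    have hc2 : (((Finset.range n).filter fun i => i % 3 = 2).image (Qe n)).card = n / 3 := by
      rw [card_image_of_injOn]
      · have hre : ((Finset.range n).filter fun i => i % 3 = 2) =
            (Finset.range (n / 3)).image fun k => 3 * k + 2 := by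
          ext x
          simp only [mem_filter, mem_range, mem_image]
          constructor
          · rintro ⟨hx1, hx2⟩; exact ⟨x / 3, by omega, by omega⟩
          · rintro ⟨k, hk, rfl⟩; omega
        rw [hre, card_image_of_injective _ (fun a b hab => by omega), card_range]
      · intro a ha b hb hab
        simp only [coe_filter, mem_coe, mem_range, Set.mem_setOf_eq] at ha hb
        have h2 : 2 ≤ (Qe n a ∩ Qe n b).card := by
          rw [hab, inter_self, card_Qe hn b hb.1]; omega
        exact leQQ hn hmod a b ha.1 hb.1 ha.2 hb.2 h2
    rw [show (Eset n).card = n / 3 + n / 3 by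
      rw [Eset, card_union_of_disjoint hdisj, hc1, hc2]]
    omega
end

section
/- Let n ≥ 20 with n ≡ 0 (mod 5). The 5-uniform hypergraph H on V = {1,...,n} with hyperedges E = { {i, i+1, i+2, i+3, i+4} : i ∈ {1, 6, 11, ..., n−4} } ∪ { {i, i+1, i+2, i−6, i−5} : i ∈ {4, 9, 14, ..., n−1} } ∪ { {i, i+1, i+2, i+7, i+8} : i ∈ {5, 10, 15, ..., n} } (indices mod n) satisfies EI(H) = C_n and |E| = 3n/5; consequently, the minimum number of hyperedges of a 5-uniform hypergraph whose edge intersection hypergraph is C_n equals 3n/5. -/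
open Finset

section Helpers

open Fin.CommRing

variable {n : ℕ} [NeZero n]

/-- The edge with base point `x` and offsets `O`. -/
def Eg (x : Fin n) (O : Finset ℤ) : Finset (Fin n) := O.image fun c : ℤ => x + (c : Fin n)

lemma cast_inj20 (hn : 20 ≤ n) {a b : ℤ} (h : |a - b| < 20) :
    ((a : Fin n) = (b : Fin n)) ↔ a = b := by
  constructor
  · intro hab
    have h0 : ((a - b : ℤ) : Fin n) = 0 := by push_cast; rw [hab]; ring
    have hd : (n : ℤ) ∣ (a - b) := (CharP.intCast_eq_zero_iff (Fin n) n _).1 h0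
    have : a - b = 0 := Int.eq_zero_of_abs_lt_dvd hd (lt_of_lt_of_le h (by exact_mod_cast hn))
    omega
  · rintro rfl; rfl

lemma mem_Eg {x z : Fin n} {O : Finset ℤ} : z ∈ Eg x O ↔ ∃ c ∈ O, z = x + (c : Fin n) := by
  simp only [Eg, mem_image, eq_comm]

lemma Eg_card_le (x : Fin n) (O : Finset ℤ) : (Eg x O).card ≤ O.card := by
  rw [Eg]; exact Finset.card_image_le

lemma Eg_inter (hn : 20 ≤ n) (x : Fin n) (O1 O2 : Finset ℤ)
    (h : ∀ a ∈ O1, ∀ b ∈ O2, |a - b| < 20) :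
    Eg x O1 ∩ Eg x O2 = Eg x (O1 ∩ O2) := by
  ext z
  simp only [Eg, mem_inter, mem_image]
  constructor
  · rintro ⟨⟨a, ha, rfl⟩, ⟨b, hb, hba⟩⟩
    have hc : (b : Fin n) = (a : Fin n) := by
      rw [add_comm x ((b:ℤ):Fin n), add_comm x ((a:ℤ):Fin n)] at hba; exact add_right_cancel hba
    have hba' : b = a := (cast_inj20 hn (by rw [abs_sub_comm]; exact h a ha b hb)).1 hc
    exact ⟨a, ⟨ha, hba' ▸ hb⟩, rfl⟩
  · rintro ⟨a, ha, rfl⟩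
    exact ⟨⟨a, ha.1, rfl⟩, ⟨a, ha.2, rfl⟩⟩

lemma Eg_card (hn : 20 ≤ n) (x : Fin n) (O : Finset ℤ)
    (h : ∀ a ∈ O, ∀ b ∈ O, |a - b| < 20) : (Eg x O).card = O.card := by
  rw [Eg]
  apply Finset.card_image_of_injOn
  intro a ha b hb hab
  dsimp only at hab
  have : (a : Fin n) = b := by
    rw [add_comm x, add_comm x] at hab; exact add_right_cancel hab
  exact (cast_inj20 hn (h a ha b hb)).1 this

lemma Eg_shift (x : Fin n) (d : ℤ) (O : Finset ℤ) :
    Eg (x + (d : Fin n)) O = Eg x (O.image (· + d)) := by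
  simp only [Eg, image_image]
  apply image_congr
  intro c _
  simp only [Function.comp_apply]
  push_cast
  ring

/-- Offsets of the three families of edges. -/
def Off : Fin 3 → Finset ℤ := ![{0,1,2,3,4}, {0,1,2,-6,-5}, {0,1,2,7,8}]

/-- Residues of the base points of the three families, in `ZMod 5`. -/
def rz : Fin 3 → ZMod 5 := ![1, 4, 0]

/-- Residues of the base points of the three families, in `ℕ`. -/
def rn : Fin 3 → ℕ := ![1, 4, 0]

lemma rn_lt : ∀ t : Fin 3, rn t < 5 := by decide

lemma rz_rn : ∀ t : Fin 3, ((rn t : ℕ) : ZMod 5) = rz t := by decide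

lemma off_zero : ∀ t : Fin 3, (0:ℤ) ∈ Off t := by decide

lemma off_bound : ∀ t : Fin 3, ∀ o ∈ Off t, -6 ≤ o ∧ o ≤ 8 := by decide

lemma off_selfbound : ∀ t : Fin 3, ∀ a ∈ Off t, ∀ b ∈ Off t, |a - b| < 20 := by decide

lemma off_card : ∀ t : Fin 3, (Off t).card = 5 := by decide

set_option maxRecDepth 40000 in
lemma key : ∀ (t1 t2 : Fin 3), ∀ d ∈ Finset.Icc (-14:ℤ) 14,
    (∃ o1 ∈ Off t1, ∃ o1' ∈ Off t2, d = o1 - o1') →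
    ((d : ZMod 5) = rz t2 - rz t1) →
    (t1 = t2 → d ≠ 0) →
    (∀ a ∈ Off t1, ∀ b ∈ (Off t2).image (· + d), |a - b| < 20) ∧
      (2 ≤ ((Off t1) ∩ (Off t2).image (· + d)).card →
        ∃ c ∈ Finset.Icc (-6:ℤ) 8, (Off t1) ∩ (Off t2).image (· + d) = {c, c+1}) := by
  decide

lemma natmod_cast (h5 : 5 ∣ n) (a : ℕ) : ((a % n : ℕ) : ZMod 5) = (a : ZMod 5) := by
  conv_rhs => rw [← Nat.mod_add_div a n]
  push_cast
  rw [(ZMod.natCast_eq_zero_iff n 5).2 h5]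
  ring

/-- The natural "residue mod 5" ring homomorphism `Fin n →+* ZMod 5` when `5 ∣ n`. -/
def psi (h5 : 5 ∣ n) : Fin n →+* ZMod 5 where
  toFun x := ((x : ℕ) : ZMod 5)
  map_zero' := by
    show (((0 : Fin n) : ℕ) : ZMod 5) = 0
    rw [show (0 : Fin n) = ((0:ℕ) : Fin n) from (Nat.cast_zero).symm, Fin.val_natCast,
      natmod_cast h5]
    simp
  map_one' := by
    show (((1 : Fin n) : ℕ) : ZMod 5) = 1
    rw [show (1 : Fin n) = ((1:ℕ) : Fin n) from (Nat.cast_one).symm, Fin.val_natCast,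
      natmod_cast h5]
    simp
  map_add' x y := by
    show (((x + y : Fin n) : ℕ) : ZMod 5) = ((x : ℕ) : ZMod 5) + ((y : ℕ) : ZMod 5)
    rw [Fin.val_add, natmod_cast h5]; push_cast; ring
  map_mul' x y := by
    show (((x * y : Fin n) : ℕ) : ZMod 5) = ((x : ℕ) : ZMod 5) * ((y : ℕ) : ZMod 5)
    rw [Fin.val_mul, natmod_cast h5]; push_cast; ring

lemma psi_val (h5 : 5 ∣ n) (x : Fin n) : psi h5 x = ((x : ℕ) : ZMod 5) := rfl

lemma psi_eq_iff_mod (h5 : 5 ∣ n) (x : Fin n) (b : ℕ) (hb : b < 5) :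
    psi h5 x = (b : ZMod 5) ↔ (x : ℕ) % 5 = b := by
  rw [psi_val, ZMod.natCast_eq_natCast_iff]
  simp [Nat.ModEq, Nat.mod_eq_of_lt hb]

lemma psi_natCast (h5 : 5 ∣ n) (i : ℕ) : psi h5 ((i : ℕ) : Fin n) = (i : ZMod 5) :=
  map_natCast _ i

/-- The key structural lemma: any two distinct edges of the construction intersecting in at
least two vertices intersect in a pair of consecutive vertices. -/
lemma inter_small (hn : 20 ≤ n) (h5 : 5 ∣ n) {t1 t2 : Fin 3} {x y : Fin n}
    (hx : psi h5 x = rz t1) (hy : psi h5 y = rz t2)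
    (hne : t1 = t2 → x ≠ y) (hcard : 2 ≤ (Eg x (Off t1) ∩ Eg y (Off t2)).card) :
    ∃ z : Fin n, Eg x (Off t1) ∩ Eg y (Off t2) = {z, z + 1} := by
  obtain ⟨v, hv, -⟩ := Finset.one_lt_card.1 (lt_of_lt_of_le one_lt_two hcard)
  rw [mem_inter] at hv
  obtain ⟨o1, ho1, hv1⟩ := mem_Eg.1 hv.1
  obtain ⟨o1', ho1', hv2⟩ := mem_Eg.1 hv.2
  have hxy : y = x + ((o1 - o1' : ℤ) : Fin n) := by
    push_cast
    linear_combination hv1 - hv2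
  have hdz : ((o1 - o1' : ℤ) : ZMod 5) = rz t2 - rz t1 := by
    have h := congrArg (psi h5) hxy
    rw [map_add, map_intCast, hx, hy] at h
    rw [h]; ring
  have hb1 := off_bound t1 o1 ho1
  have hb2 := off_bound t2 o1' ho1'
  have hdmem : (o1 - o1') ∈ Finset.Icc (-14:ℤ) 14 := Finset.mem_Icc.2 (by omega)
  obtain ⟨hbound, himp⟩ := key t1 t2 (o1 - o1') hdmem ⟨o1, ho1, o1', ho1', rfl⟩ hdz
    (fun ht h0 => hne ht (by rw [hxy, h0]; simp))
  have hI : Eg x (Off t1) ∩ Eg y (Off t2)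
      = Eg x (Off t1 ∩ (Off t2).image (· + (o1 - o1'))) := by
    rw [hxy, Eg_shift, Eg_inter hn x _ _ hbound]
  have h2 : 2 ≤ (Off t1 ∩ (Off t2).image (· + (o1 - o1'))).card := by
    rw [hI] at hcard
    exact le_trans hcard (Eg_card_le _ _)
  obtain ⟨c, -, hc⟩ := himp h2
  refine ⟨x + (c : Fin n), ?_⟩
  rw [hI, hc]
  show ({c, c+1} : Finset ℤ).image (fun c : ℤ => x + (c : Fin n)) = _
  rw [image_insert, image_singleton]
  congr 1
  · rw [singleton_inj]
    push_cast
    ring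

lemma Eg_inj (hn : 20 ≤ n) (h5 : 5 ∣ n) {t1 t2 : Fin 3} {x y : Fin n}
    (hx : psi h5 x = rz t1) (hy : psi h5 y = rz t2)
    (heq : Eg x (Off t1) = Eg y (Off t2)) : t1 = t2 ∧ x = y := by
  by_contra hc
  have hne : t1 = t2 → x ≠ y := fun ht hxy => hc ⟨ht, hxy⟩
  have h5c : (Eg y (Off t2)).card = 5 := by
    rw [Eg_card hn y _ (off_selfbound t2), off_card]
  have hcard : 2 ≤ (Eg x (Off t1) ∩ Eg y (Off t2)).card := by
    rw [heq, inter_self, h5c]; omega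
  obtain ⟨z, hz⟩ := inter_small hn h5 hx hy hne hcard
  rw [heq, inter_self] at hz
  rw [hz] at h5c
  have hle : ({z, z+1} : Finset (Fin n)).card ≤ 2 :=
    le_trans (Finset.card_insert_le _ _) (by simp)
  omega


/-- The three families of edges. -/
def Fam (n : ℕ) [NeZero n] (t : Fin 3) : Finset (Finset (Fin n)) :=
  ((Finset.range n).filter fun i => i % 5 = rn t).image fun i : ℕ => Eg ((i : ℕ) : Fin n) (Off t)

lemma mem_Fam (h5 : 5 ∣ n) {t : Fin 3} {e : Finset (Fin n)} :
    e ∈ Fam n t ↔ ∃ x : Fin n, psi h5 x = rz t ∧ e = Eg x (Off t) := by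
  constructor
  · rintro he
    obtain ⟨i, hi, rfl⟩ := Finset.mem_image.1 he
    rw [mem_filter, mem_range] at hi
    refine ⟨(i : Fin n), ?_, rfl⟩
    rw [psi_natCast h5, ← ZMod.natCast_mod i 5, hi.2, rz_rn]
  · rintro ⟨x, hx, rfl⟩
    refine Finset.mem_image.2 ⟨(x : ℕ), ?_, ?_⟩
    · rw [mem_filter, mem_range]
      exact ⟨x.isLt, (psi_eq_iff_mod h5 x (rn t) (rn_lt t)).1 (by rw [hx, rz_rn])⟩
    · rw [Fin.cast_val_eq_self]

lemma mem_FamU (h5 : 5 ∣ n) {e : Finset (Fin n)} :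
    e ∈ Fam n 0 ∪ Fam n 1 ∪ Fam n 2 ↔
      ∃ t : Fin 3, ∃ x : Fin n, psi h5 x = rz t ∧ e = Eg x (Off t) := by
  simp only [mem_union]
  constructor
  · rintro ((h | h) | h)
    · exact ⟨0, (mem_Fam h5).1 h⟩
    · exact ⟨1, (mem_Fam h5).1 h⟩
    · exact ⟨2, (mem_Fam h5).1 h⟩
  · rintro ⟨t, x, hx, rfl⟩
    fin_cases t
    · exact Or.inl (Or.inl ((mem_Fam h5).2 ⟨x, hx, rfl⟩))
    · exact Or.inl (Or.inr ((mem_Fam h5).2 ⟨x, hx, rfl⟩))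
    · exact Or.inr ((mem_Fam h5).2 ⟨x, hx, rfl⟩)

lemma OffA : Off 0 = ({0,1,2,3,4} : Finset ℤ) := rfl
lemma OffB : Off 1 = ({0,1,2,-6,-5} : Finset ℤ) := rfl
lemma OffC : Off 2 = ({0,1,2,7,8} : Finset ℤ) := rfl

lemma edgeA_eq (i : ℕ) :
    ({((i : ℕ) : Fin n), ((i + 1 : ℕ) : Fin n), ((i + 2 : ℕ) : Fin n), ((i + 3 : ℕ) : Fin n),
      ((i + 4 : ℕ) : Fin n)} : Finset (Fin n)) = Eg ((i : ℕ) : Fin n) (Off 0) := by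
  rw [Eg, OffA]
  simp only [image_insert, image_singleton]
  congr 1
  · push_cast; ring
  congr 1
  · push_cast; ring
  congr 1
  · push_cast; ring
  congr 1
  · push_cast; ring
  rw [singleton_inj]
  push_cast; ring

lemma edgeB_eq (i : ℕ) :
    ({((i : ℕ) : Fin n), ((i + 1 : ℕ) : Fin n), ((i + 2 : ℕ) : Fin n),
      ((i : Fin n) - 6), ((i : Fin n) - 5)} : Finset (Fin n)) = Eg ((i : ℕ) : Fin n) (Off 1) := by
  rw [Eg, OffB]
  simp only [image_insert, image_singleton]
  congr 1
  · push_cast; ring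
  congr 1
  · push_cast; ring
  congr 1
  · push_cast; ring
  congr 1
  · push_cast; ring
  rw [singleton_inj]
  push_cast; ring

lemma edgeC_eq (i : ℕ) :
    ({((i : ℕ) : Fin n), ((i + 1 : ℕ) : Fin n), ((i + 2 : ℕ) : Fin n), ((i + 7 : ℕ) : Fin n),
      ((i + 8 : ℕ) : Fin n)} : Finset (Fin n)) = Eg ((i : ℕ) : Fin n) (Off 2) := by
  rw [Eg, OffC]
  simp only [image_insert, image_singleton]
  congr 1
  · push_cast; ring
  congr 1
  · push_cast; ring
  congr 1
  · push_cast; ring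
  congr 1
  · push_cast; ring
  rw [singleton_inj]
  push_cast; ring


lemma succ_ne (hn : 20 ≤ n) (z : Fin n) : z ≠ z + 1 := by
  intro h
  have h1 : ((1:ℤ) : Fin n) = ((0:ℤ) : Fin n) := by
    push_cast
    linear_combination -h
  have := (cast_inj20 hn (by norm_num)).1 h1
  norm_num at this

lemma pair_mem_EIh (hn : 20 ≤ n) (h5 : 5 ∣ n) (t1 t2 : Fin 3) (x : Fin n) (d c : ℤ)
    (hx : psi h5 x = rz t1) (hy : psi h5 (x + (d : Fin n)) = rz t2)
    (hbound : ∀ a ∈ Off t1, ∀ b ∈ (Off t2).image (· + d), |a - b| < 20)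
    (hO : Off t1 ∩ (Off t2).image (· + d) = {c, c+1}) :
    ({x + (c : Fin n), x + (c : Fin n) + 1} : Finset (Fin n))
      ∈ EIh (Fam n 0 ∪ Fam n 1 ∪ Fam n 2) := by
  have hI : Eg x (Off t1) ∩ Eg (x + (d : Fin n)) (Off t2)
      = ({x + (c:Fin n), x + (c:Fin n) + 1} : Finset (Fin n)) := by
    rw [Eg_shift, Eg_inter hn x _ _ hbound, hO]
    show ({c, c+1} : Finset ℤ).image _ = _
    rw [image_insert, image_singleton]
    congr 1
    rw [singleton_inj]; push_cast; ring
  have he1 : Eg x (Off t1) ∈ Fam n 0 ∪ Fam n 1 ∪ Fam n 2 :=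
    (mem_FamU h5).2 ⟨t1, x, hx, rfl⟩
  have he2 : Eg (x + (d : Fin n)) (Off t2) ∈ Fam n 0 ∪ Fam n 1 ∪ Fam n 2 :=
    (mem_FamU h5).2 ⟨t2, _, hy, rfl⟩
  have hcard2 : ({x + (c:Fin n), x + (c:Fin n) + 1} : Finset (Fin n)).card = 2 :=
    Finset.card_pair (succ_ne hn _)
  have hne : Eg x (Off t1) ≠ Eg (x + (d : Fin n)) (Off t2) := by
    intro h
    have h5c : (Eg (x + (d : Fin n)) (Off t2)).card = 5 := by
      rw [Eg_card hn _ _ (off_selfbound t2), off_card]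
    rw [h, inter_self] at hI
    rw [hI, hcard2] at h5c
    norm_num at h5c
  simp only [EIh, Finset.mem_image, Finset.mem_filter, Finset.mem_product]
  exact ⟨(Eg x (Off t1), Eg (x + (d : Fin n)) (Off t2)),
    ⟨⟨he1, he2⟩, hne, by rw [hI]; exact le_of_eq hcard2.symm⟩, hI⟩

lemma part1 (hn : 20 ≤ n) (h5 : 5 ∣ n) : EIh (Fam n 0 ∪ Fam n 1 ∪ Fam n 2) = cyc n := by
  apply Finset.Subset.antisymm
  · intro p hp
    simp only [EIh, Finset.mem_image, Finset.mem_filter, Finset.mem_product] at hp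
    obtain ⟨⟨e1, e2⟩, ⟨⟨h1, h2⟩, hne, hcard⟩, rfl⟩ := hp
    obtain ⟨t1, x, hx, rfl⟩ := (mem_FamU h5).1 h1
    obtain ⟨t2, y, hy, rfl⟩ := (mem_FamU h5).1 h2
    obtain ⟨z, hz⟩ := inter_small hn h5 hx hy (fun ht hxy => hne (by rw [ht, hxy])) hcard
    rw [cyc, hz]
    exact Finset.mem_image.2 ⟨z, mem_univ z, rfl⟩
  · intro p hp
    obtain ⟨v, -, rfl⟩ := Finset.mem_image.1 hp
    have hr : (v : ℕ) % 5 < 5 := Nat.mod_lt _ (by norm_num)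
    have hv : psi h5 v = (((v:ℕ) % 5 : ℕ) : ZMod 5) :=
      (psi_eq_iff_mod h5 v _ hr).2 rfl
    interval_cases h : ((v : ℕ) % 5)
    · -- r = 0 : C at v, B at v - 1
      have := pair_mem_EIh hn h5 2 1 v (-1) 0 (by rw [hv]; decide)
        (by rw [map_add, map_intCast, hv]; decide) (by decide) (by decide)
      have h0 : v + ((0:ℤ) : Fin n) = v := by push_cast; ring
      rwa [h0] at this
    · -- r = 1 : A at v, C at v - 1
      have := pair_mem_EIh hn h5 0 2 v (-1) 0 (by rw [hv]; decide)
        (by rw [map_add, map_intCast, hv]; decide) (by decide) (by decide)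
      have h0 : v + ((0:ℤ) : Fin n) = v := by push_cast; ring
      rwa [h0] at this
    · -- r = 2 : A at v - 1, C at v - 7
      have := pair_mem_EIh hn h5 0 2 (v + ((-1 : ℤ) : Fin n)) (-6) 1
        (by rw [map_add, map_intCast, hv]; decide)
        (by rw [map_add, map_intCast, map_add, map_intCast, hv]; decide)
        (by decide) (by decide)
      have h0 : v + ((-1:ℤ) : Fin n) + ((1:ℤ) : Fin n) = v := by push_cast; ring
      rwa [h0] at this
    · -- r = 3 : A at v - 2, B at v + 6
      have := pair_mem_EIh hn h5 0 1 (v + ((-2 : ℤ) : Fin n)) 8 2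
        (by rw [map_add, map_intCast, hv]; decide)
        (by rw [map_add, map_intCast, map_add, map_intCast, hv]; decide)
        (by decide) (by decide)
      have h0 : v + ((-2:ℤ) : Fin n) + ((2:ℤ) : Fin n) = v := by push_cast; ring
      rwa [h0] at this
    · -- r = 4 : A at v - 3, B at v
      have := pair_mem_EIh hn h5 0 1 (v + ((-3 : ℤ) : Fin n)) 3 3
        (by rw [map_add, map_intCast, hv]; decide)
        (by rw [map_add, map_intCast, map_add, map_intCast, hv]; decide)
        (by decide) (by decide)
      have h0 : v + ((-3:ℤ) : Fin n) + ((3:ℤ) : Fin n) = v := by push_cast; ring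
      rwa [h0] at this


lemma Fam_card (hn : 20 ≤ n) (h5 : 5 ∣ n) (t : Fin 3) : (Fam n t).card = n / 5 := by
  rw [Fam, Finset.card_image_of_injOn]
  · have himg : ((Finset.range (n/5)).image fun j => 5*j + rn t)
        = (Finset.range n).filter fun i => i % 5 = rn t := by
      ext i
      simp only [Finset.mem_image, Finset.mem_filter, Finset.mem_range]
      have h5d := h5
      obtain ⟨q, rfl⟩ := h5d
      have := rn_lt t
      constructor
      · rintro ⟨j, hj, rfl⟩
        constructor <;> omega
      · rintro ⟨hin, hir⟩
        exact ⟨i / 5, by omega, by omega⟩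
    rw [← himg, Finset.card_image_of_injective _ (fun a b hab => by omega), Finset.card_range]
  · intro i hi j hj hij
    simp only [Finset.coe_filter, Finset.mem_range, Set.mem_setOf_eq] at hi hj
    dsimp only at hij
    have hx : psi h5 ((i:ℕ) : Fin n) = rz t := by
      rw [psi_natCast h5, ← ZMod.natCast_mod i 5, hi.2, rz_rn]
    have hy : psi h5 ((j:ℕ) : Fin n) = rz t := by
      rw [psi_natCast h5, ← ZMod.natCast_mod j 5, hj.2, rz_rn]
    have heq := (Eg_inj hn h5 hx hy hij).2
    have hvi := congrArg Fin.val heq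
    rw [Fin.val_natCast, Fin.val_natCast] at hvi
    have h20 : 0 < n := by omega
    rw [Nat.mod_eq_of_lt hi.1, Nat.mod_eq_of_lt hj.1] at hvi
    exact hvi

lemma Fam_disj (hn : 20 ≤ n) (h5 : 5 ∣ n) {t1 t2 : Fin 3} (h : t1 ≠ t2) :
    Disjoint (Fam n t1) (Fam n t2) := by
  rw [Finset.disjoint_left]
  intro e he1 he2
  obtain ⟨x, hx, rfl⟩ := (mem_Fam h5).1 he1
  obtain ⟨y, hy, heq⟩ := (mem_Fam h5).1 he2
  exact h (Eg_inj hn h5 hx hy heq).1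

lemma part2 (hn : 20 ≤ n) (h5 : 5 ∣ n) :
    (Fam n 0 ∪ Fam n 1 ∪ Fam n 2).card = 3 * (n / 5) := by
  rw [Finset.card_union_of_disjoint
      (Finset.disjoint_union_left.2 ⟨Fam_disj hn h5 (by decide), Fam_disj hn h5 (by decide)⟩),
    Finset.card_union_of_disjoint (Fam_disj hn h5 (by decide)),
    Fam_card hn h5 0, Fam_card hn h5 1, Fam_card hn h5 2]
  ring

lemma Fam_uniform (hn : 20 ≤ n) (h5 : 5 ∣ n) :
    ∀ e ∈ Fam n 0 ∪ Fam n 1 ∪ Fam n 2, e.card = 5 := by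
  intro e he
  obtain ⟨t, x, hx, rfl⟩ := (mem_FamU h5).1 he
  rw [Eg_card hn _ _ (off_selfbound t), off_card]

lemma deg3 (hn : 20 ≤ n) (E' : Finset (Finset (Fin n))) (hEI : EIh E' = cyc n) (v : Fin n) :
    3 ≤ hdeg E' v := by
  have h1 : ({v - 1, v} : Finset (Fin n)) ∈ EIh E' := by
    rw [hEI, cyc]
    exact Finset.mem_image.2 ⟨v - 1, mem_univ _, by rw [sub_add_cancel]⟩
  have h2 : ({v, v + 1} : Finset (Fin n)) ∈ EIh E' := by
    rw [hEI, cyc]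
    exact Finset.mem_image.2 ⟨v, mem_univ _, rfl⟩
  simp only [EIh, Finset.mem_image, Finset.mem_filter, Finset.mem_product] at h1 h2
  obtain ⟨⟨e1, e2⟩, ⟨⟨he1, he2⟩, hne, -⟩, hi⟩ := h1
  obtain ⟨⟨f1, f2⟩, ⟨⟨hf1, hf2⟩, hnf, -⟩, hj⟩ := h2
  dsimp only at hi hj hne hnf
  have hv1 : v ∈ e1 ∧ v ∈ e2 := by
    have hm : v ∈ e1 ∩ e2 := by rw [hi]; simp
    rw [mem_inter] at hm; exact hm
  have hvf : v ∈ f1 ∧ v ∈ f2 := by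
    have hm : v ∈ f1 ∩ f2 := by rw [hj]; simp
    rw [mem_inter] at hm; exact hm
  have hdiff : e1 ∩ e2 ≠ f1 ∩ f2 := by
    rw [hi, hj]
    intro hE
    have hm : v + 1 ∈ ({v - 1, v} : Finset (Fin n)) := by rw [hE]; simp
    rw [mem_insert, mem_singleton] at hm
    rcases hm with h' | h'
    · have hc : ((2:ℤ) : Fin n) = ((0:ℤ) : Fin n) := by
        push_cast
        linear_combination h'
      have := (cast_inj20 hn (by norm_num)).1 hc
      norm_num at this
    · have hc : ((1:ℤ) : Fin n) = ((0:ℤ) : Fin n) := by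
        push_cast
        linear_combination h'
      have := (cast_inj20 hn (by norm_num)).1 hc
      norm_num at this
  obtain ⟨f, hfm, hfv, hfe1, hfe2⟩ :
      ∃ f, f ∈ E' ∧ v ∈ f ∧ f ≠ e1 ∧ f ≠ e2 := by
    by_cases a1 : f1 = e1
    · refine ⟨f2, hf2, hvf.2, ?_, ?_⟩
      · intro h; exact hnf (by rw [a1, h])
      · intro h; exact hdiff (by rw [← a1, ← h])
    · by_cases b1 : f1 = e2
      · refine ⟨f2, hf2, hvf.2, ?_, ?_⟩
        · intro h; exact hdiff (by rw [← b1, ← h, inter_comm])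
        · intro h; exact hnf (by rw [b1, h])
      · exact ⟨f1, hf1, hvf.1, a1, b1⟩
  have hsub : ({e1, e2, f} : Finset (Finset (Fin n))) ⊆ E'.filter (fun e => v ∈ e) := by
    intro g hg
    rw [mem_insert, mem_insert, mem_singleton] at hg
    rw [mem_filter]
    rcases hg with rfl | rfl | rfl
    · exact ⟨he1, hv1.1⟩
    · exact ⟨he2, hv1.2⟩
    · exact ⟨hfm, hfv⟩
  have hcard3 : ({e1, e2, f} : Finset (Finset (Fin n))).card = 3 := by
    rw [Finset.card_insert_of_notMem, Finset.card_insert_of_notMem, Finset.card_singleton]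
    · rw [mem_singleton]; exact fun h => hfe2 h.symm
    · rw [mem_insert, mem_singleton]
      push_neg
      exact ⟨hne, fun h => hfe1 h.symm⟩
  rw [hdeg, ← hcard3]
  exact Finset.card_le_card hsub

lemma lower (hn : 20 ≤ n) (hmod : n % 5 = 0) (E' : Finset (Finset (Fin n)))
    (hu : ∀ e ∈ E', e.card = 5) (hEI : EIh E' = cyc n) : 3 * n / 5 ≤ E'.card := by
  have hsum : ∑ v : Fin n, hdeg E' v = ∑ e ∈ E', e.card := by
    simp only [hdeg, Finset.card_filter]
    rw [Finset.sum_comm]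
    apply Finset.sum_congr rfl
    intro e _
    rw [Finset.sum_ite_mem, Finset.univ_inter, Finset.sum_const, smul_eq_mul, mul_one]
  have h5m : ∑ e ∈ E', e.card = 5 * E'.card := by
    rw [Finset.sum_congr rfl hu, Finset.sum_const, smul_eq_mul]
    ring
  have h3n : 3 * n ≤ ∑ v : Fin n, hdeg E' v := by
    calc 3 * n = ∑ _v : Fin n, 3 := by
          rw [Finset.sum_const, smul_eq_mul, Finset.card_univ, Fintype.card_fin]; ring
      _ ≤ ∑ v : Fin n, hdeg E' v := Finset.sum_le_sum fun v _ => deg3 hn E' hEI v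
  rw [hsum, h5m] at h3n
  omega

end Helpers

open Fin.NatCast

theorem stmt_15 (n : ℕ) [NeZero n] (hn : 20 ≤ n) (hmod : n % 5 = 0) :
    letI E : Finset (Finset (Fin n)) :=
      (((Finset.range n).filter fun i => i % 5 = 1).image fun i : ℕ =>
        ({(i : Fin n), ((i + 1 : ℕ) : Fin n), ((i + 2 : ℕ) : Fin n),
          ((i + 3 : ℕ) : Fin n), ((i + 4 : ℕ) : Fin n)} : Finset (Fin n))) ∪
      (((Finset.range n).filter fun i => i % 5 = 4).image fun i : ℕ =>
        ({(i : Fin n), ((i + 1 : ℕ) : Fin n), ((i + 2 : ℕ) : Fin n),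
          ((i : Fin n) - 6), ((i : Fin n) - 5)} : Finset (Fin n))) ∪
      (((Finset.range n).filter fun i => i % 5 = 0).image fun i : ℕ =>
        ({(i : Fin n), ((i + 1 : ℕ) : Fin n), ((i + 2 : ℕ) : Fin n),
          ((i + 7 : ℕ) : Fin n), ((i + 8 : ℕ) : Fin n)} : Finset (Fin n)))
    EIh E = cyc n ∧ 5 * E.card = 3 * n ∧
      IsLeast {m : ℕ | ∃ E' : Finset (Finset (Fin n)),
        (∀ e ∈ E', e.card = 5) ∧ EIh E' = cyc n ∧ E'.card = m} (3 * n / 5) := by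
  have h5 : 5 ∣ n := Nat.dvd_of_mod_eq_zero hmod
  have hEF : (((Finset.range n).filter fun i => i % 5 = 1).image fun i : ℕ =>
        ({(i : Fin n), ((i + 1 : ℕ) : Fin n), ((i + 2 : ℕ) : Fin n),
          ((i + 3 : ℕ) : Fin n), ((i + 4 : ℕ) : Fin n)} : Finset (Fin n))) ∪
      (((Finset.range n).filter fun i => i % 5 = 4).image fun i : ℕ =>
        ({(i : Fin n), ((i + 1 : ℕ) : Fin n), ((i + 2 : ℕ) : Fin n),
          ((i : Fin n) - 6), ((i : Fin n) - 5)} : Finset (Fin n))) ∪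
      (((Finset.range n).filter fun i => i % 5 = 0).image fun i : ℕ =>
        ({(i : Fin n), ((i + 1 : ℕ) : Fin n), ((i + 2 : ℕ) : Fin n),
          ((i + 7 : ℕ) : Fin n), ((i + 8 : ℕ) : Fin n)} : Finset (Fin n)))
      = Fam n 0 ∪ Fam n 1 ∪ Fam n 2 := by
    rw [show Fam n 0 = ((Finset.range n).filter fun i => i % 5 = 1).image
        (fun i : ℕ => Eg ((i:ℕ) : Fin n) (Off 0)) from rfl,
      show Fam n 1 = ((Finset.range n).filter fun i => i % 5 = 4).image
        (fun i : ℕ => Eg ((i:ℕ) : Fin n) (Off 1)) from rfl,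
      show Fam n 2 = ((Finset.range n).filter fun i => i % 5 = 0).image
        (fun i : ℕ => Eg ((i:ℕ) : Fin n) (Off 2)) from rfl]
    exact congrArg₂ _ (congrArg₂ _ (Finset.image_congr fun i _ => edgeA_eq i)
      (Finset.image_congr fun i _ => edgeB_eq i)) (Finset.image_congr fun i _ => edgeC_eq i)
  rw [hEF]
  refine ⟨part1 hn h5, by rw [part2 hn h5]; omega,
    ⟨_, Fam_uniform hn h5, part1 hn h5, by rw [part2 hn h5]; omega⟩, ?_⟩
  rintro m ⟨E', hu, hEI, rfl⟩
  exact lower hn hmod E' hu hEI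
end

section
/- The optimal value of the linear program: minimize x5 + x4 + x32 + x3 + x22 + x2 subject to 4x5 + 3x4 + 3x32 + 2x3 + 2x22 + x2 ≥ 2, 2x5 + x4 ≤ x32 + 2x22 + x2, and x5, x4, x32, x3, x22, x2 ≥ 0, equals 3/5, attained at x32 = 2/5, x5 = 1/5 and all other variables 0. -/
theorem stmt_17 :
    IsLeast {v : ℝ | ∃ x5 x4 x32 x3 x22 x2 : ℝ,
      2 ≤ 4 * x5 + 3 * x4 + 3 * x32 + 2 * x3 + 2 * x22 + x2 ∧
      2 * x5 + x4 ≤ x32 + 2 * x22 + x2 ∧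
      0 ≤ x5 ∧ 0 ≤ x4 ∧ 0 ≤ x32 ∧ 0 ≤ x3 ∧ 0 ≤ x22 ∧ 0 ≤ x2 ∧
      v = x5 + x4 + x32 + x3 + x22 + x2} (3 / 5) ∧
    (2 ≤ 4 * (1 / 5 : ℝ) + 3 * 0 + 3 * (2 / 5) + 2 * 0 + 2 * 0 + 0 ∧
      2 * (1 / 5 : ℝ) + 0 ≤ 2 / 5 + 2 * 0 + 0 ∧
      (1 / 5 : ℝ) + 0 + 2 / 5 + 0 + 0 + 0 = 3 / 5) := by
  refine ⟨⟨⟨1/5, 0, 2/5, 0, 0, 0, by norm_num⟩, ?_⟩, by norm_num⟩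
  rintro v ⟨x5, x4, x32, x3, x22, x2, h1, h2, h5, h4, h32, h3, h22, hx2, rfl⟩
  linarith
end

section
/- Let H = (V, E) be a 5-uniform hypergraph with EI(H) = C_n. If e ∈ E is a (3,2)-hyperedge, then e contributes to at most 3 edges of C_n; that is, the set of edges of C_n of the form e ∩ e' with e' ∈ E, e' ≠ e, |e ∩ e'| ≥ 2, has cardinality at most 3. -/
open Finset

theorem stmt_18 (n : ℕ) [NeZero n] (hn : 3 ≤ n) (E : Finset (Finset (Fin n)))
    (hunif : ∀ e ∈ E, e.card = 5) (hEI : EIh E = cyc n)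
    (e : Finset (Fin n)) (he : e ∈ E) (h32 : IsSection32 e) :
    ((cyc n).filter fun f =>
      ∃ e' ∈ E, e' ≠ e ∧ f = e ∩ e' ∧ 2 ≤ (e ∩ e').card).card ≤ 3 := by
  obtain ⟨i, j, hej, hcard, h1, h2, h3, h4⟩ := h32
  have hsub : ((cyc n).filter fun f => ∃ e' ∈ E, e' ≠ e ∧ f = e ∩ e' ∧ 2 ≤ (e ∩ e').card)
      ⊆ ({ {i, i+1}, {i+1, i+2}, {j, j+1} } : Finset (Finset (Fin n))) := by
    intro f hf
    simp only [mem_filter] at hf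
    obtain ⟨hfc, e', he', hne, hfe, hc2⟩ := hf
    simp only [cyc, mem_image, mem_univ, true_and] at hfc
    obtain ⟨k, hk⟩ := hfc
    have hke : k ∈ e := by
      have hm : k ∈ f := by rw [← hk]; simp
      rw [hfe] at hm; exact (mem_inter.mp hm).1
    have hk1e : k + 1 ∈ e := by
      have hm : k + 1 ∈ f := by rw [← hk]; simp
      rw [hfe] at hm; exact (mem_inter.mp hm).1
    have hcase : k = i ∨ k = i + 1 ∨ k = i + 2 ∨ k = j ∨ k = j + 1 := by
      rw [hej] at hke; simpa using hke
    simp only [mem_insert, mem_singleton]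
    rcases hcase with rfl | rfl | rfl | rfl | rfl
    · left; exact hk.symm
    · right; left; rw [← hk]; congr 2; open Fin.CommRing in ring
    · have h' : i + 2 + 1 = i + 3 := by open Fin.CommRing in ring
      rw [h'] at hk1e; exact absurd hk1e h2
    · right; right; exact hk.symm
    · have h' : j + 1 + 1 = j + 2 := by open Fin.CommRing in ring
      rw [h'] at hk1e; exact absurd hk1e h4
  refine (card_le_card hsub).trans ?_
  refine (card_insert_le _ _).trans (Nat.succ_le_succ ?_)
  refine (card_insert_le _ _).trans (Nat.succ_le_succ ?_)
  simp
end

section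
/- Let n ≥ 24 be even and let H = (V, E) be a 6-uniform, 3-regular hypergraph with EI(H) = C_n. Then |E| = n/2, and this is minimum: every 6-uniform hypergraph H' with EI(H') = C_n satisfies |E(H')| ≥ n/2. -/
open Finset

lemma sum_hdeg {n : ℕ} (E : Finset (Finset (Fin n))) :
    ∑ v : Fin n, hdeg E v = ∑ e ∈ E, e.card := by
  simp only [hdeg, Finset.card_filter]
  rw [Finset.sum_comm]
  refine Finset.sum_congr rfl fun e _ => ?_
  rw [← Finset.card_filter]
  simp [Finset.filter_univ_mem]

open Fin.NatCast in
lemma deg_ge_three {n : ℕ} [NeZero n] (hn : 24 ≤ n) (E : Finset (Finset (Fin n)))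
    (hEI : EIh E = cyc n) (v : Fin n) : 3 ≤ hdeg E v := by
  by_contra h
  push_neg at h
  have hmem1 : ({v, v + 1} : Finset (Fin n)) ∈ EIh E := by
    rw [hEI, cyc]; exact mem_image.2 ⟨v, mem_univ v, rfl⟩
  have hmem2 : ({v - 1, v} : Finset (Fin n)) ∈ EIh E := by
    rw [hEI, cyc]
    refine mem_image.2 ⟨v - 1, mem_univ _, ?_⟩
    rw [sub_add_cancel]
  simp only [EIh, mem_image, mem_filter, mem_product] at hmem1 hmem2
  obtain ⟨⟨e1, e2⟩, ⟨⟨he1, he2⟩, hne, _⟩, hint⟩ := hmem1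
  obtain ⟨⟨f1, f2⟩, ⟨⟨hf1, hf2⟩, hnf, _⟩, hintf⟩ := hmem2
  simp only at hint hintf hne hnf
  have hve1 : v ∈ e1 ∩ e2 := by rw [hint]; simp
  have hvf1 : v ∈ f1 ∩ f2 := by rw [hintf]; simp
  set F := E.filter fun e => v ∈ e with hF
  have he1F : e1 ∈ F := mem_filter.2 ⟨he1, (mem_inter.1 hve1).1⟩
  have he2F : e2 ∈ F := mem_filter.2 ⟨he2, (mem_inter.1 hve1).2⟩
  have hf1F : f1 ∈ F := mem_filter.2 ⟨hf1, (mem_inter.1 hvf1).1⟩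
  have hf2F : f2 ∈ F := mem_filter.2 ⟨hf2, (mem_inter.1 hvf1).2⟩
  have hsub : ({e1, e2} : Finset (Finset (Fin n))) ⊆ F := by
    intro x hx
    rcases mem_insert.1 hx with rfl | hx
    · exact he1F
    · rw [mem_singleton.1 hx]; exact he2F
  have hcard2 : ({e1, e2} : Finset (Finset (Fin n))).card = 2 :=
    card_pair hne
  have hFcard : F.card ≤ 2 := Nat.lt_succ_iff.1 h
  have hFeq : F = ({e1, e2} : Finset (Finset (Fin n))) :=
    (Finset.eq_of_subset_of_card_le hsub (by omega)).symm
  have hf1' : f1 = e1 ∨ f1 = e2 := by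
    have := hFeq ▸ hf1F; simpa [mem_insert, mem_singleton] using this
  have hf2' : f2 = e1 ∨ f2 = e2 := by
    have := hFeq ▸ hf2F; simpa [mem_insert, mem_singleton] using this
  have hinter : f1 ∩ f2 = e1 ∩ e2 := by
    rcases hf1' with rfl | rfl <;> rcases hf2' with rfl | rfl
    · exact absurd rfl hnf
    · rfl
    · exact inter_comm _ _
    · exact absurd rfl hnf
  have hsets : ({v - 1, v} : Finset (Fin n)) = {v, v + 1} := by
    rw [← hintf, hinter, hint]
  have hvm : (v - 1 : Fin n) ∈ ({v, v + 1} : Finset (Fin n)) := by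
    rw [← hsets]; simp
  have hcastne : ∀ k : ℕ, 0 < k → k < n → ((k : Fin n) ≠ 0) := by
    intro k hk hkn heq
    rw [Fin.natCast_eq_zero] at heq
    have := Nat.le_of_dvd hk heq
    omega
  rcases mem_insert.1 hvm with h1 | h1
  · have h2 : v - 1 + 1 = v + 1 := by rw [h1]
    rw [sub_add_cancel] at h2
    have h3 : (1 : Fin n) = 0 := (left_eq_add).1 h2
    exact hcastne 1 one_pos (by omega) (by rw [Nat.cast_one]; exact h3)
  · have h1' := mem_singleton.1 h1
    have h2 : v - 1 + 1 = v + 1 + 1 := by rw [h1']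
    rw [sub_add_cancel, add_assoc] at h2
    have h3 : (1 + 1 : Fin n) = 0 := (left_eq_add).1 h2
    refine hcastne 2 (by omega) (by omega) ?_
    rw [Nat.cast_ofNat, ← one_add_one_eq_two]
    exact h3

theorem stmt_19 (n : ℕ) [NeZero n] (hn : 24 ≤ n) (heven : n % 2 = 0)
    (E : Finset (Finset (Fin n))) (hunif : ∀ e ∈ E, e.card = 6)
    (hreg : ∀ v : Fin n, hdeg E v = 3) (hEI : EIh E = cyc n) :
    2 * E.card = n ∧
      (∀ E' : Finset (Finset (Fin n)), (∀ e ∈ E', e.card = 6) → EIh E' = cyc n →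
        n / 2 ≤ E'.card) := by
  constructor
  · have h1 := sum_hdeg E
    rw [Finset.sum_congr rfl fun v _ => hreg v,
        Finset.sum_congr rfl hunif] at h1
    simp [Finset.card_univ, mul_comm] at h1
    omega
  · intro E' hu' hEI'
    have h1 := sum_hdeg E'
    have h2 : 3 * n ≤ ∑ v : Fin n, hdeg E' v := by
      calc 3 * n = ∑ _v : Fin n, 3 := by simp [mul_comm]
        _ ≤ ∑ v : Fin n, hdeg E' v :=
          Finset.sum_le_sum fun v _ => deg_ge_three hn E' hEI' v
    rw [h1, Finset.sum_congr rfl hu'] at h2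
    simp [mul_comm] at h2
    omega
end
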